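/- arXiv:2111.01940 — 2 statements merged into one kernel-verified Lean document; each statement's English description precedes it below -/
import Mathlib

section
/- Let W be skew-symmetric, X ∈ ℝ^{n×p} with XᵀX = I_p, and Y(τ) the Cayley curve. Then Y'(τ) = -(I + (τ/2)W)⁻¹ W ((X + Y(τ))/2) for all τ where I + (τ/2)W is invertible. -/
open Matrix
attribute [local instance] Matrix.normedAddCommGroup Matrix.normedSpace

private lemma hasDerivAt_matrix {a b : ℕ} {f : ℝ → Matrix (Fin a) (Fin b) ℝ}
    {f' : Matrix (Fin a) (Fin b) ℝ} {τ : ℝ} :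
    HasDerivAt f f' τ ↔ ∀ i j, HasDerivAt (fun t => f t i j) (f' i j) τ := by
  constructor
  · intro h i j
    exact hasDerivAt_pi.mp (hasDerivAt_pi.mp h i) j
  · intro h
    refine hasDerivAt_pi.mpr ?_
    intro i
    refine hasDerivAt_pi.mpr ?_
    exact h i

private lemma HasDerivAt.matmul {a b c : ℕ} {f : ℝ → Matrix (Fin a) (Fin b) ℝ}
    {g : ℝ → Matrix (Fin b) (Fin c) ℝ} {f' : Matrix (Fin a) (Fin b) ℝ}
    {g' : Matrix (Fin b) (Fin c) ℝ} {τ : ℝ}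
    (hf : HasDerivAt f f' τ) (hg : HasDerivAt g g' τ) :
    HasDerivAt (fun t => f t * g t) (f' * g τ + f τ * g') τ := by
  rw [hasDerivAt_matrix] at hf hg ⊢
  intro i j
  simp only [Matrix.mul_apply, Matrix.add_apply, ← Finset.sum_add_distrib]
  exact HasDerivAt.fun_sum fun k _ => (hf i k).mul (hg k j)

private lemma differentiableAt_det {a : ℕ} {M : ℝ → Matrix (Fin a) (Fin a) ℝ} {τ : ℝ}
    (h : ∀ i j, DifferentiableAt ℝ (fun t => M t i j) τ) :
    DifferentiableAt ℝ (fun t => (M t).det) τ := by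
  simp only [Matrix.det_apply']
  exact DifferentiableAt.fun_sum fun σ _ =>
    (DifferentiableAt.fun_finsetProd fun i _ => h (σ i) i).const_mul _

/-- The derivative of the Cayley curve satisfies
`Y'(τ) = -(I + (τ/2)W)⁻¹ W ((X + Y(τ))/2)` whenever `I + (τ/2)W` is invertible. -/
theorem cayley_deriv {n p : ℕ} (W : Matrix (Fin n) (Fin n) ℝ)
    (hW : Wᵀ = -W) (X : Matrix (Fin n) (Fin p) ℝ) (hX : Xᵀ * X = 1)
    (Y : ℝ → Matrix (Fin n) (Fin p) ℝ)
    (hY : ∀ τ : ℝ, Y τ = (1 + (τ / 2) • W)⁻¹ * (1 - (τ / 2) • W) * X)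
    (τ : ℝ) (hinv : IsUnit ((1 : Matrix (Fin n) (Fin n) ℝ) + (τ / 2) • W)) :
    HasDerivAt Y (-((1 + (τ / 2) • W)⁻¹ * W * ((2 : ℝ)⁻¹ • (X + Y τ)))) τ := by
  set A : ℝ → Matrix (Fin n) (Fin n) ℝ := fun t => 1 + (t / 2) • W with hA_def
  set B : ℝ → Matrix (Fin n) (Fin n) ℝ := fun t => 1 - (t / 2) • W with hB_def
  -- entries of A are differentiable
  have hAent : ∀ i j, DifferentiableAt ℝ (fun t => A t i j) τ := by
    intro i j
    simp only [hA_def, Matrix.add_apply, Matrix.smul_apply, smul_eq_mul]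
    exact (differentiableAt_const _).add ((differentiableAt_id.div_const 2).mul_const _)
  have hAdiff : HasDerivAt A ((2 : ℝ)⁻¹ • W) τ := by
    have := (((hasDerivAt_id τ).div_const 2).smul_const W).const_add
      (1 : Matrix (Fin n) (Fin n) ℝ)
    rw [one_div] at this
    exact this
  have hBdiff : HasDerivAt B (-((2 : ℝ)⁻¹ • W)) τ := by
    have := (((hasDerivAt_id τ).div_const 2).smul_const W).const_sub
      (1 : Matrix (Fin n) (Fin n) ℝ)
    rw [one_div] at this
    exact this
  -- determinant of A is differentiable and nonzero at τ
  have hdet : DifferentiableAt ℝ (fun t => (A t).det) τ := differentiableAt_det hAent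
  have hdet_ne : (A τ).det ≠ 0 := by
    have := (Matrix.isUnit_iff_isUnit_det _).mp hinv
    exact IsUnit.ne_zero this
  -- adjugate of A is differentiable
  have hadj : DifferentiableAt ℝ (fun t => (A t).adjugate) τ := by
    rw [show (fun t => (A t).adjugate) = fun t => (fun i j => (A t).adjugate i j) from rfl]
    apply differentiableAt_pi.mpr
    intro i
    apply differentiableAt_pi.mpr
    intro j
    simp only [Matrix.adjugate_apply]
    apply differentiableAt_det
    intro k l
    simp only [Matrix.updateRow_apply]
    by_cases hk : k = j
    · simp [hk]
    · simp only [hk, if_false]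
      exact hAent k l
  -- Y is differentiable at τ (using the adjugate formula for the inverse)
  have hYeq : Y = fun t => ((A t).det)⁻¹ • ((A t).adjugate * (B t * X)) := by
    funext t
    rw [hY t, Matrix.inv_def, Ring.inverse_eq_inv', Matrix.smul_mul, Matrix.smul_mul,
      Matrix.mul_assoc]
  have hBXdiff : HasDerivAt (fun t => B t * X) (-((2 : ℝ)⁻¹ • W) * X + B τ * (0 : Matrix (Fin n) (Fin p) ℝ)) τ :=
    hBdiff.matmul (hasDerivAt_const τ X)
  have hYdiff : DifferentiableAt ℝ Y τ := by
    rw [hYeq]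
    exact (hdet.inv hdet_ne).smul (hadj.hasDerivAt.matmul hBXdiff).differentiableAt
  -- let D be the derivative of Y at τ
  obtain ⟨D, hD⟩ : ∃ D, HasDerivAt Y D τ := ⟨_, hYdiff.hasDerivAt⟩
  -- derivative of A * Y
  have hG : HasDerivAt (fun t => A t * Y t)
      ((2 : ℝ)⁻¹ • W * Y τ + A τ * D) τ := hAdiff.matmul hD
  -- A t * Y t = B t * X eventually (near τ, A t is invertible)
  have heventually : (fun t => A t * Y t) =ᶠ[nhds τ] fun t => B t * X := by
    have hcont : ContinuousAt (fun t => (A t).det) τ := hdet.continuousAt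
    have hne : ∀ᶠ t in nhds τ, (A t).det ≠ 0 :=
      hcont.eventually_ne hdet_ne
    filter_upwards [hne] with t ht
    rw [hY t, Matrix.mul_assoc, ← Matrix.mul_assoc (A t),
      Matrix.mul_nonsing_inv _ (isUnit_iff_ne_zero.mpr ht), Matrix.one_mul]
  have hG2 : HasDerivAt (fun t => A t * Y t) (-((2 : ℝ)⁻¹ • W) * X + B τ * (0 : Matrix (Fin n) (Fin p) ℝ)) τ :=
    hBXdiff.congr_of_eventuallyEq heventually
  have huniq := hG.unique hG2
  -- solve for D
  have hAD : A τ * D = -((2 : ℝ)⁻¹ • (W * (X + Y τ))) := by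
    have : A τ * D = -((2 : ℝ)⁻¹ • W) * X - (2 : ℝ)⁻¹ • W * Y τ := by
      rw [Matrix.mul_zero, add_zero] at huniq
      linear_combination (norm := module) huniq
    rw [this]
    rw [Matrix.mul_add, Matrix.neg_mul, Matrix.smul_mul, Matrix.smul_mul]
    module
  have hDval : D = -((1 + (τ / 2) • W)⁻¹ * W * ((2 : ℝ)⁻¹ • (X + Y τ))) := by
    have hdetA : IsUnit (A τ).det := isUnit_iff_ne_zero.mpr hdet_ne
    have := congrArg (fun M => (A τ)⁻¹ * M) hAD
    rw [Matrix.nonsing_inv_mul_cancel_left _ _ hdetA] at this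
    rw [this]
    rw [Matrix.mul_neg, Matrix.mul_smul, ← Matrix.mul_assoc, Matrix.mul_smul]
  rw [← hDval]
  exact hD
end

section
/- Let F : ℝ^{n×p} → ℝ be differentiable with Euclidean gradient G at X ∈ V_p(ℝ^n), set A = GXᵀ - XGᵀ and Y(τ) = (I + (τ/2)A)⁻¹(I - (τ/2)A)X. Then d/dτ F(Y(τ)) at τ = 0 equals -(1/2)‖A‖_F², so Y is a descent curve whenever A ≠ 0. -/
set_option maxHeartbeats 1000000


open Matrix
attribute [local instance] Matrix.normedAddCommGroup Matrix.normedSpace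

/-- Descent property of the Cayley curve: if `F` has Euclidean gradient `G` at
`X` (meaning the derivative of `F` at `X` in direction `Z` is `trace(GᵀZ)`),
`A = GXᵀ - XGᵀ`, and `Y(τ) = (I + (τ/2)A)⁻¹ (I - (τ/2)A) X`, then
`d/dτ F(Y(τ))|_{τ=0} = -(1/2)‖A‖_F²`. -/
theorem cayley_descent_curve {n p : ℕ}
    (F : Matrix (Fin n) (Fin p) ℝ → ℝ)
    (G X : Matrix (Fin n) (Fin p) ℝ) (hX : Xᵀ * X = 1)
    (L : Matrix (Fin n) (Fin p) ℝ →L[ℝ] ℝ)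
    (hF : HasFDerivAt F L X)
    (hL : ∀ Z : Matrix (Fin n) (Fin p) ℝ, L Z = Matrix.trace (Gᵀ * Z))
    (A : Matrix (Fin n) (Fin n) ℝ) (hA : A = G * Xᵀ - X * Gᵀ) :
    HasDerivAt (fun τ : ℝ => F ((1 + (τ / 2) • A)⁻¹ * (1 - (τ / 2) • A) * X))
      (-(1 / 2) * ∑ i, ∑ j, (A i j) ^ 2) 0 := by
  classical
  set C : Matrix (Fin n) (Fin p) ℝ := A * (A * X) with hCdef
  set h : ℝ → Matrix (Fin n) (Fin p) ℝ :=
    fun τ => (1 + (τ / 2) • A)⁻¹ * C with hhdef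
  -- continuity of τ ↦ 1 + (τ/2) • A
  have hMcont : Continuous fun τ : ℝ => (1 : Matrix (Fin n) (Fin n) ℝ) + (τ / 2) • A :=
    continuous_const.add ((continuous_id.div_const 2).smul continuous_const)
  -- determinant is eventually a unit near 0
  have hdetcont : ContinuousAt (fun τ : ℝ => ((1 : Matrix (Fin n) (Fin n) ℝ) + (τ / 2) • A).det) 0 :=
    (hMcont.matrix_det).continuousAt
  have hdet0 : ((1 : Matrix (Fin n) (Fin n) ℝ) + ((0:ℝ) / 2) • A).det = 1 := by
    simp
  have hev : ∀ᶠ τ : ℝ in nhds 0, IsUnit ((1 : Matrix (Fin n) (Fin n) ℝ) + (τ / 2) • A).det := by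
    have := hdetcont.eventually_ne (by rw [hdet0]; exact one_ne_zero)
    filter_upwards [this] with τ hτ
    exact isUnit_iff_ne_zero.2 hτ
  -- the curve agrees near 0 with a nice expression
  have key : (fun τ : ℝ => X - τ • (A * X) + (τ ^ 2 / 2) • h τ)
      =ᶠ[nhds (0:ℝ)] fun τ : ℝ => (1 + (τ / 2) • A)⁻¹ * (1 - (τ / 2) • A) * X := by
    filter_upwards [hev] with τ hu
    set M : Matrix (Fin n) (Fin n) ℝ := 1 + (τ / 2) • A with hMdef
    have hMM : M⁻¹ * M = 1 := Matrix.nonsing_inv_mul M hu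
    have hMM' : M * M⁻¹ = 1 := Matrix.mul_nonsing_inv M hu
    have hZ : M * (1 - τ • A + (τ ^ 2 / 2) • (M⁻¹ * (A * A))) = 1 - (τ / 2) • A := by
      have hmid : M * ((τ ^ 2 / 2) • (M⁻¹ * (A * A))) = (τ ^ 2 / 2) • (A * A) := by
        rw [Matrix.mul_smul, ← Matrix.mul_assoc, hMM', Matrix.one_mul]
      rw [Matrix.mul_add, Matrix.mul_sub, hmid, hMdef]
      rw [Matrix.mul_one, Matrix.add_mul, Matrix.one_mul, Matrix.smul_mul,
        Matrix.mul_smul, smul_smul]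
      ring_nf
      module
    have hinv : M⁻¹ * (1 - (τ / 2) • A) = 1 - τ • A + (τ ^ 2 / 2) • (M⁻¹ * (A * A)) := by
      rw [← hZ, ← Matrix.mul_assoc, hMM, Matrix.one_mul]
    show X - τ • (A * X) + (τ ^ 2 / 2) • (M⁻¹ * C) = M⁻¹ * (1 - (τ / 2) • A) * X
    rw [hinv, Matrix.add_mul, Matrix.sub_mul, Matrix.one_mul, Matrix.smul_mul,
      Matrix.smul_mul, hCdef, Matrix.mul_assoc, Matrix.mul_assoc]
  -- continuity of h at 0
  have hhcont : ContinuousAt h 0 := by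
    have heq : h = fun τ : ℝ =>
        ((((1 : Matrix (Fin n) (Fin n) ℝ) + (τ / 2) • A).det)⁻¹ •
          ((1 : Matrix (Fin n) (Fin n) ℝ) + (τ / 2) • A).adjugate) * C := by
      funext τ
      show (1 + (τ / 2) • A)⁻¹ * C = _
      rw [Matrix.inv_def, Ring.inverse_eq_inv']
    rw [heq]
    have hd : ContinuousAt (fun τ : ℝ =>
        (((1 : Matrix (Fin n) (Fin n) ℝ) + (τ / 2) • A).det)⁻¹) 0 :=
      hdetcont.inv₀ (by rw [hdet0]; exact one_ne_zero)
    have hadj : ContinuousAt (fun τ : ℝ =>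
        ((1 : Matrix (Fin n) (Fin n) ℝ) + (τ / 2) • A).adjugate) 0 :=
      (hMcont.matrix_adjugate).continuousAt
    have hmulC : Continuous fun M : Matrix (Fin n) (Fin n) ℝ => M * C :=
      continuous_id.matrix_mul continuous_const
    exact hmulC.continuousAt.comp (hd.smul hadj)
  -- the derivative of the nice expression
  have hder : HasDerivAt (fun τ : ℝ => X - τ • (A * X) + (τ ^ 2 / 2) • h τ) (-(A * X)) 0 := by
    have h1 : HasDerivAt (fun τ : ℝ => X - τ • (A * X)) (-(A * X)) 0 := by
      have h1' := ((hasDerivAt_id' (0:ℝ)).smul_const (A * X)).const_sub X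
      rw [one_smul] at h1'
      exact h1'
    have h2 : HasDerivAt (fun τ : ℝ => (τ ^ 2 / 2) • h τ) 0 0 := by
      refine hasDerivAt_iff_tendsto_slope.2 ?_
      have hev2 : (fun τ : ℝ => (τ / 2) • h τ) =ᶠ[nhdsWithin (0:ℝ) {(0:ℝ)}ᶜ]
          slope (fun τ : ℝ => (τ ^ 2 / 2) • h τ) 0 := by
        filter_upwards [self_mem_nhdsWithin] with τ hτ
        have hτ0 : τ ≠ 0 := hτ
        rw [slope_def_module]
        simp only [sub_zero, zero_div, zero_smul, smul_smul]
        rw [show ((0:ℝ) ^ 2 / (2:ℝ)) • h 0 = 0 by norm_num, sub_zero, smul_smul]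
        congr 1
        field_simp
      refine Filter.Tendsto.congr' hev2 ?_
      have hlim := (((continuousAt_id (x := (0:ℝ))).div_const 2).smul hhcont).tendsto
      simp only [id_eq, Pi.smul_apply', zero_div, zero_smul] at hlim
      exact hlim.mono_left nhdsWithin_le_nhds
    have h3 := h1.add h2
    rw [add_zero] at h3
    exact h3
  have hY : HasDerivAt (fun τ : ℝ => (1 + (τ / 2) • A)⁻¹ * (1 - (τ / 2) • A) * X)
      (-(A * X)) 0 := hder.congr_of_eventuallyEq key.symm
  -- value at 0 is X
  have hY0 : ((1 : Matrix (Fin n) (Fin n) ℝ) + ((0:ℝ) / 2) • A)⁻¹ * (1 - ((0:ℝ) / 2) • A) * X = X := by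
    simp
  have hcomp : HasDerivAt (fun τ : ℝ => F ((1 + (τ / 2) • A)⁻¹ * (1 - (τ / 2) • A) * X))
      (L (-(A * X))) 0 := by
    have hF' : HasFDerivAt F L (((1 : Matrix (Fin n) (Fin n) ℝ) + ((0:ℝ) / 2) • A)⁻¹ *
        (1 - ((0:ℝ) / 2) • A) * X) := by rw [hY0]; exact hF
    exact hF'.comp_hasDerivAt 0 hY
  -- identify the derivative value
  have htrace : L (-(A * X)) = -(1 / 2) * ∑ i, ∑ j, (A i j) ^ 2 := by
    have hAt : Aᵀ = -A := by
      rw [hA]; simp [Matrix.transpose_sub, Matrix.transpose_mul]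
    have hsum : ∑ i, ∑ j, (A i j) ^ 2 = Matrix.trace (A * Aᵀ) := by
      simp [Matrix.trace, Matrix.mul_apply, Matrix.diag, sq, Matrix.transpose_apply]
    -- trace (A * Aᵀ) = 2 * trace (Gᵀ * (A * X))
    have e1 : G * Xᵀ * (X * Gᵀ) = G * Gᵀ := by
      rw [← Matrix.mul_assoc, Matrix.mul_assoc G Xᵀ X, hX, Matrix.mul_one]
    have e2 : X * Gᵀ * (G * Xᵀ) = X * (Gᵀ * G) * Xᵀ := by
      rw [Matrix.mul_assoc, ← Matrix.mul_assoc Gᵀ G Xᵀ, ← Matrix.mul_assoc]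
    have c2 : Matrix.trace (X * (Gᵀ * G) * Xᵀ) = Matrix.trace (Gᵀ * G) := by
      rw [Matrix.trace_mul_comm, ← Matrix.mul_assoc, hX, Matrix.one_mul]
    have c3 : Matrix.trace (G * Xᵀ * (G * Xᵀ)) = Matrix.trace (X * Gᵀ * (X * Gᵀ)) := by
      rw [← Matrix.trace_transpose (G * Xᵀ * (G * Xᵀ)), Matrix.transpose_mul,
        Matrix.transpose_mul, Matrix.transpose_transpose]
    have c1 : Matrix.trace (G * Xᵀ * (X * Gᵀ)) = Matrix.trace (Gᵀ * G) := by
      rw [e1, Matrix.trace_mul_comm]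
    have cAA : Matrix.trace (A * Aᵀ) =
        2 * Matrix.trace (Gᵀ * G) - 2 * Matrix.trace (X * Gᵀ * (X * Gᵀ)) := by
      rw [hAt, hA]
      rw [Matrix.mul_neg, Matrix.trace_neg, Matrix.sub_mul, Matrix.mul_sub, Matrix.mul_sub]
      rw [Matrix.trace_sub, Matrix.trace_sub, Matrix.trace_sub]
      rw [c3, c1]
      rw [e2, c2]
      ring
    have cGAX : Matrix.trace (Gᵀ * (A * X)) =
        Matrix.trace (Gᵀ * G) - Matrix.trace (X * Gᵀ * (X * Gᵀ)) := by
      rw [hA, Matrix.sub_mul, Matrix.mul_sub, Matrix.trace_sub]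
      congr 1
      · rw [Matrix.mul_assoc G Xᵀ X, hX, Matrix.mul_one]
      · rw [Matrix.trace_mul_comm, Matrix.mul_assoc]
    rw [hL, Matrix.mul_neg, Matrix.trace_neg, hsum, cAA, cGAX]
    ring
  rw [← htrace]
  exact hcomp
end
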